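/- Let H be a finite-dimensional real Hilbert space with scalar product (·,·) and norm ‖·‖_H, and let S : H → H be a continuous map with the following property: there exists ρ > 0 such that (S(v), v) > 0 for all v ∈ H with ‖v‖_H = ρ. Then there exists an element w ∈ H such that S(w) = 0 and ‖w‖_H ≤ ρ. -/

import Mathlib

open Metric MeasureTheory Set Finset
open scoped RealInnerProductSpace Topology Convolution

noncomputable section BrouwerAux

variable {E : Type*} [NormedAddCommGroup E] [InnerProductSpace ℝ E] [FiniteDimensional ℝ E]

theorem exists_poly [MeasurableSpace E] [BorelSpace E] (μ : Measure E) [μ.IsAddHaarMeasure]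
    {ρ : ℝ} {A : E → E →L[ℝ] E} (hA : ContinuousOn A (closedBall 0 ρ)) :
    ∃ Q : Polynomial ℝ, ∀ t : ℝ,
      (∫ x in closedBall (0:E) ρ, ((1 : E →L[ℝ] E) + t • A x).det ∂μ) = Q.eval t := by
  classical
  set B := closedBall (0:E) ρ with hBdef
  set d := Module.finrank ℝ E with hd
  let b : Module.Basis (Fin d) ℝ E := Module.finBasis ℝ E
  set M : E → Matrix (Fin d) (Fin d) ℝ := fun x => LinearMap.toMatrix b b (A x) with hMdef
  have hM : ContinuousOn M B := by
    have hc : Continuous (fun f : E →L[ℝ] E => LinearMap.toMatrix b b (f : E →ₗ[ℝ] E)) :=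
      LinearMap.continuous_of_finiteDimensional
        (((LinearMap.toMatrix b b).toLinearMap).comp (ContinuousLinearMap.coeLM ℝ))
    exact hc.comp_continuousOn hA
  have hMe : ∀ i j : Fin d, ContinuousOn (fun x => M x i j) B := fun i j =>
    (continuous_apply j).comp_continuousOn ((continuous_apply i).comp_continuousOn hM)
  have key : ∀ (t : ℝ) (x : E), ((1 : E →L[ℝ] E) + t • A x).det
      = ∑ σ : Equiv.Perm (Fin d), ∑ s ∈ Finset.univ.powerset,
        (((Equiv.Perm.sign σ : ℤ) : ℝ) * (∏ i ∈ s, (1 : Matrix (Fin d) (Fin d) ℝ) (σ i) i)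
            * t ^ (Finset.univ \ s).card)
          * ∏ i ∈ Finset.univ \ s, M x (σ i) i := by
    intro t x
    have h1 : ((1 : E →L[ℝ] E) + t • A x).det = ((1 : Matrix (Fin d) (Fin d) ℝ) + t • M x).det := by
      show LinearMap.det _ = _
      rw [← LinearMap.det_toMatrix b]
      congr 1
      simp [hMdef, ContinuousLinearMap.one_def, ContinuousLinearMap.coe_id, LinearMap.toMatrix_id]
    rw [h1, Matrix.det_apply]
    refine Finset.sum_congr rfl (fun σ _ => ?_)
    have h2 : ∀ i : Fin d, ((1 : Matrix (Fin d) (Fin d) ℝ) + t • M x) (σ i) i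
        = (1 : Matrix (Fin d) (Fin d) ℝ) (σ i) i + t * M x (σ i) i := by
      intro i; simp [Matrix.add_apply, Matrix.smul_apply, smul_eq_mul]
    calc Equiv.Perm.sign σ • ∏ i, ((1 : Matrix (Fin d) (Fin d) ℝ) + t • M x) (σ i) i
        = (((Equiv.Perm.sign σ : ℤ) : ℝ)) * ∏ i, ((1 : Matrix (Fin d) (Fin d) ℝ) (σ i) i + t * M x (σ i) i) := by
          simp [h2, Units.smul_def, zsmul_eq_mul]
      _ = _ := by
          rw [Finset.prod_add]
          rw [Finset.mul_sum]
          refine Finset.sum_congr rfl (fun s _ => ?_)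
          rw [Finset.prod_mul_distrib, Finset.prod_const]
          ring
  have hint : ∀ (σ : Equiv.Perm (Fin d)) (s : Finset (Fin d)),
      IntegrableOn (fun x => ∏ i ∈ Finset.univ \ s, M x (σ i) i) B μ := by
    intro σ s
    exact (continuousOn_finset_prod _ (fun i _ => hMe (σ i) i)).integrableOn_compact
      (isCompact_closedBall _ _)
  refine ⟨∑ σ : Equiv.Perm (Fin d), ∑ s ∈ Finset.univ.powerset,
      Polynomial.C ((((Equiv.Perm.sign σ : ℤ) : ℝ))
          * (∏ i ∈ s, (1 : Matrix (Fin d) (Fin d) ℝ) (σ i) i)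
          * (∫ x in B, ∏ i ∈ Finset.univ \ s, M x (σ i) i ∂μ))
        * Polynomial.X ^ (Finset.univ \ s).card, ?_⟩
  intro t
  calc ∫ x in B, ((1 : E →L[ℝ] E) + t • A x).det ∂μ
      = ∫ x in B, (∑ σ : Equiv.Perm (Fin d), ∑ s ∈ Finset.univ.powerset,
          ((((Equiv.Perm.sign σ : ℤ) : ℝ)) * (∏ i ∈ s, (1 : Matrix (Fin d) (Fin d) ℝ) (σ i) i)
            * t ^ (Finset.univ \ s).card) * ∏ i ∈ Finset.univ \ s, M x (σ i) i) ∂μ := by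
        refine setIntegral_congr_fun measurableSet_closedBall (fun x _ => ?_)
        exact key t x
    _ = ∑ σ : Equiv.Perm (Fin d), ∑ s ∈ Finset.univ.powerset,
          ((((Equiv.Perm.sign σ : ℤ) : ℝ)) * (∏ i ∈ s, (1 : Matrix (Fin d) (Fin d) ℝ) (σ i) i)
            * t ^ (Finset.univ \ s).card) * ∫ x in B, (∏ i ∈ Finset.univ \ s, M x (σ i) i) ∂μ := by
        rw [integral_finset_sum]
        · refine Finset.sum_congr rfl (fun σ _ => ?_)
          rw [integral_finset_sum]
          · refine Finset.sum_congr rfl (fun s _ => ?_)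
            exact MeasureTheory.integral_const_mul _ _
          · exact fun s _ => (hint σ s).const_mul _
        · intro σ _
          exact integrable_finset_sum _ (fun s _ => (hint σ s).const_mul _)
    _ = _ := by
        rw [Polynomial.eval_finset_sum]
        refine Finset.sum_congr rfl (fun σ _ => ?_)
        rw [Polynomial.eval_finset_sum]
        refine Finset.sum_congr rfl (fun s _ => ?_)
        simp only [Polynomial.eval_mul, Polynomial.eval_pow, Polynomial.eval_C,
          Polynomial.eval_X]
        ring

set_option maxHeartbeats 2000000 in
theorem no_smooth_retraction [MeasurableSpace E] [BorelSpace E] (μ : Measure E)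
    [μ.IsAddHaarMeasure] [Nontrivial E]
    {ρ : ℝ} (hρ : 0 < ρ) {U : Set E} (hU : IsOpen U) (hBU : closedBall 0 ρ ⊆ U)
    {r : E → E} (hr : ContDiffOn ℝ 1 r U)
    (hnorm : ∀ x ∈ closedBall (0:E) ρ, ‖r x‖ = ρ)
    (hid : ∀ x : E, ‖x‖ = ρ → r x = x) : False := by
  classical
  set B := closedBall (0:E) ρ with hBdef
  have hBc : IsCompact B := isCompact_closedBall _ _
  set h : E → E := fun x => r x - x with hhdef
  have hh : ContDiffOn ℝ 1 h U := hr.sub contDiffOn_id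
  have hdiff : ∀ x ∈ U, DifferentiableAt ℝ h x := fun x hx =>
    ((hh.contDiffAt (hU.mem_nhds hx)).differentiableAt one_ne_zero)
  set A : E → E →L[ℝ] E := fun x => fderiv ℝ h x with hAdef
  have hAc : ContinuousOn A U := hh.continuousOn_fderiv_of_isOpen hU le_rfl
  obtain ⟨K0, hK0⟩ := hBc.exists_bound_of_continuousOn (hAc.mono hBU)
  set K := max K0 0 with hKdef
  have hKnonneg : (0:ℝ) ≤ K := le_max_right _ _
  have hK : ∀ x ∈ B, ‖A x‖ ≤ K := fun x hx => (hK0 x hx).trans (le_max_left _ _)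
  have hlip : ∀ x ∈ B, ∀ y ∈ B, ‖h y - h x‖ ≤ K * ‖y - x‖ := fun x hx y hy =>
    Convex.norm_image_sub_le_of_norm_fderiv_le (fun z hz => hdiff z (hBU hz))
      (fun z hz => hK z hz) (convex_closedBall _ _) hx hy
  have h0 : ∀ x : E, ‖x‖ = ρ → h x = 0 := fun x hx => by simp [hhdef, hid x hx]
  set t₀ : ℝ := min (1 / (2 * (K + 1))) (1/2) with ht₀def
  have ht₀pos : 0 < t₀ := lt_min (by positivity) (by norm_num)
  have ht₀half : t₀ ≤ 1/2 := min_le_right _ _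
  have hKt : ∀ t ∈ Icc (0:ℝ) t₀, t * K ≤ 1/2 := by
    intro t ht
    have h1 : t ≤ 1/(2*(K+1)) := ht.2.trans (min_le_left _ _)
    have h2 : (1/(2*(K+1))) * K ≤ 1/2 := by
      rw [div_mul_eq_mul_div, div_le_div_iff₀ (by positivity) (by norm_num)]
      nlinarith
    calc t * K ≤ (1/(2*(K+1))) * K := mul_le_mul_of_nonneg_right h1 hKnonneg
      _ ≤ 1/2 := h2
  set f : ℝ → E → E := fun t x => x + t • h x with hfdef
  have hf'at : ∀ (t : ℝ), ∀ x ∈ U, HasFDerivAt (f t) ((1 : E →L[ℝ] E) + t • A x) x := by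
    intro t x hx
    have h1 : HasFDerivAt h (A x) x := (hdiff x hx).hasFDerivAt
    exact (hasFDerivAt_id x).add (h1.const_smul t)
  have hunit : ∀ t ∈ Icc (0:ℝ) t₀, ∀ x ∈ B, IsUnit ((1 : E →L[ℝ] E) + t • A x) := by
    intro t ht x hx
    have hlt : ‖-(t • A x)‖ < 1 := by
      rw [norm_neg]
      have hns : ‖t • A x‖ ≤ |t| * ‖A x‖ := by
        simpa [Real.norm_eq_abs] using norm_smul_le t (A x)
      rw [abs_of_nonneg ht.1] at hns
      have h2 : t * ‖A x‖ ≤ 1/2 := by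
        calc t * ‖A x‖ ≤ t * K := mul_le_mul_of_nonneg_left (hK x hx) ht.1
          _ ≤ 1/2 := hKt t ht
      linarith
    refine ⟨Units.oneSub (-(t • A x)) hlt, ?_⟩
    show (1 : E →L[ℝ] E) - -(t • A x) = _
    rw [sub_neg_eq_add]
  have hdetpos : ∀ t ∈ Icc (0:ℝ) t₀, ∀ x ∈ B, 0 < ((1 : E →L[ℝ] E) + t • A x).det := by
    intro t ht x hx
    by_contra hle
    push_neg at hle
    have hφ : ContinuousOn (fun s : ℝ => ((1 : E →L[ℝ] E) + s • A x).det) (Icc 0 t) := by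
      apply Continuous.continuousOn
      exact ContinuousLinearMap.continuous_det.comp
        (continuous_const.add (continuous_id.smul continuous_const))
    have h0t : (0:ℝ) ∈ Icc (((1 : E →L[ℝ] E) + t • A x).det)
        (((1 : E →L[ℝ] E) + (0:ℝ) • A x).det) := by
      constructor
      · exact hle
      · have h1 : ((1 : E →L[ℝ] E) + (0:ℝ) • A x) = 1 := by simp
        rw [h1]
        show (0:ℝ) ≤ LinearMap.det ((1 : E →L[ℝ] E) : E →ₗ[ℝ] E)
        rw [show ((1 : E →L[ℝ] E) : E →ₗ[ℝ] E) = LinearMap.id from rfl, LinearMap.det_id]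
        norm_num
    obtain ⟨s, hs, hs0⟩ := intermediate_value_Icc' ht.1 hφ h0t
    have hs0' : ((1 : E →L[ℝ] E) + s • A x).det = 0 := hs0
    have hsIcc : s ∈ Icc (0:ℝ) t₀ := ⟨hs.1, hs.2.trans ht.2⟩
    have hu := hunit s hsIcc x hx
    have : IsUnit (((1 : E →L[ℝ] E) + s • A x).det) := by
      have h1 : IsUnit (((1 : E →L[ℝ] E) + s • A x : E →L[ℝ] E) : E →ₗ[ℝ] E) :=
        hu.map (ContinuousLinearMap.toLinearMapRingHom : (E →L[ℝ] E) →+* (E →ₗ[ℝ] E))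
      exact h1.map LinearMap.det
    rw [hs0'] at this
    exact (isUnit_iff_ne_zero.mp this) rfl
  have hinj : ∀ t ∈ Icc (0:ℝ) t₀, InjOn (f t) B := by
    intro t ht x hx y hy hxy
    have h1 : x - y = t • (h y - h x) := by
      have hxy' : x + t • h x = y + t • h y := hxy
      rw [smul_sub, sub_eq_sub_iff_add_eq_add, hxy']
      abel
    have h2 : ‖x - y‖ ≤ (1/2) * ‖x - y‖ := by
      calc ‖x - y‖ = t * ‖h y - h x‖ := by
            rw [h1, norm_smul, Real.norm_eq_abs, abs_of_nonneg ht.1]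
        _ ≤ t * (K * ‖y - x‖) := mul_le_mul_of_nonneg_left (hlip x hx y hy) ht.1
        _ = (t*K) * ‖y - x‖ := by ring
        _ ≤ (1/2) * ‖y-x‖ := mul_le_mul_of_nonneg_right (hKt t ht) (norm_nonneg _)
        _ = (1/2) * ‖x-y‖ := by rw [norm_sub_rev]
    have h3 : ‖x - y‖ = 0 := by linarith [norm_nonneg (x-y)]
    exact sub_eq_zero.mp (norm_eq_zero.mp h3)
  have hmaps : ∀ t ∈ Icc (0:ℝ) 1, ∀ x ∈ B, f t x ∈ B := by
    intro t ht x hx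
    have hfx : f t x = (1-t) • x + t • r x := by
      show x + t • (r x - x) = _
      rw [smul_sub, sub_smul, one_smul]
      abel
    rw [hBdef, mem_closedBall, dist_zero_right] at hx ⊢
    rw [hfx]
    calc ‖(1-t) • x + t • r x‖ ≤ ‖(1-t) • x‖ + ‖t • r x‖ := norm_add_le _ _
      _ = (1-t) * ‖x‖ + t * ‖r x‖ := by
          rw [norm_smul, norm_smul, Real.norm_eq_abs, Real.norm_eq_abs,
            abs_of_nonneg (by linarith [ht.2]), abs_of_nonneg ht.1]
      _ ≤ (1-t) * ρ + t * ρ := by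
          have := hnorm x (by rw [hBdef, mem_closedBall, dist_zero_right]; exact hx)
          rw [this]
          have h1t : (0:ℝ) ≤ 1 - t := by linarith [ht.2]
          nlinarith
      _ = ρ := by ring
  have hsph : ∀ (t : ℝ), ∀ x : E, ‖x‖ = ρ → f t x = x := fun t x hx => by
    show x + t • h x = x
    rw [h0 x hx, smul_zero, add_zero]
  have hfc : ∀ t : ℝ, ContinuousOn (f t) B :=
    fun t => continuousOn_id.add (((hh.continuousOn).mono hBU).const_smul t)
  have himg : ∀ t ∈ Icc (0:ℝ) t₀, f t '' B = B := by
    intro t ht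
    have htIcc1 : t ∈ Icc (0:ℝ) 1 := ⟨ht.1, ht.2.trans (ht₀half.trans (by norm_num))⟩
    have hcompact : IsCompact (f t '' B) := hBc.image_of_continuousOn (hfc t)
    have hcl : IsClosed (f t '' B) := hcompact.isClosed
    apply Set.Subset.antisymm
    · rintro _ ⟨x, hx, rfl⟩; exact hmaps t htIcc1 x hx
    have hopen : IsOpen (f t '' ball 0 ρ) := by
      rw [isOpen_iff_mem_nhds]
      rintro _ ⟨x, hx, rfl⟩
      have hxU : x ∈ U := hBU (ball_subset_closedBall hx)
      obtain ⟨u, hu⟩ := hunit t ht x (ball_subset_closedBall hx)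
      let e := ContinuousLinearEquiv.unitsEquiv ℝ E u
      have hst : HasStrictFDerivAt (f t) (e : E →L[ℝ] E) x := by
        have hca : ContDiffAt ℝ 1 (f t) x :=
          contDiffAt_id.add ((hh.contDiffAt (hU.mem_nhds hxU)).const_smul t)
        have hstr := hca.hasStrictFDerivAt one_ne_zero
        have hfd : fderiv ℝ (f t) x = (e : E →L[ℝ] E) := by
          rw [(hf'at t x hxU).fderiv]
          rw [← hu]
          rfl
        rwa [hfd] at hstr
      have hmap := hst.map_nhds_eq_of_equiv
      rw [← hmap]
      exact Filter.image_mem_map (isOpen_ball.mem_nhds hx)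
    have hVsub : ball (0:E) ρ ⊆ f t '' B := by
      by_contra hnot
      obtain ⟨y, hyV, hyn⟩ := not_subset.mp hnot
      have hpre : IsPreconnected (ball (0:E) ρ) := (convex_ball _ _).isPreconnected
      have hcover : ball (0:E) ρ ⊆ (f t '' ball 0 ρ) ∪ (f t '' B)ᶜ := by
        intro z hz
        by_cases hzT : z ∈ f t '' B
        · left
          obtain ⟨x, hxB, hfx⟩ := hzT
          rcases lt_or_eq_of_le (mem_closedBall_zero_iff.mp hxB) with hlt | heq
        -- strict: x in open ball
          · exact ⟨x, mem_ball_zero_iff.mpr hlt, hfx⟩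
          · exfalso
            have hxz : x = z := by rw [← hfx, hsph t x heq]
            have hzρ : ‖z‖ = ρ := by rw [← hxz]; exact heq
            exact (ne_of_lt (mem_ball_zero_iff.mp hz)) hzρ
        · right; exact hzT
      have hne1 : (ball (0:E) ρ ∩ f t '' ball 0 ρ).Nonempty := by
        refine ⟨f t 0, ?_, mem_image_of_mem _ (mem_ball_self hρ)⟩
        rw [mem_ball_zero_iff]
        have hr0 : ‖r 0‖ = ρ := hnorm 0 (mem_closedBall_self hρ.le)
        have : ‖f t 0‖ = t * ρ := by
          show ‖(0:E) + t • h 0‖ = t * ρ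
          rw [zero_add, norm_smul, Real.norm_eq_abs, abs_of_nonneg ht.1]
          congr 1
          show ‖r 0 - 0‖ = ρ
          rw [sub_zero, hr0]
        rw [this]
        nlinarith [ht.2, ht₀half, hρ]
      have hne2 : (ball (0:E) ρ ∩ (f t '' B)ᶜ).Nonempty := ⟨y, hyV, hyn⟩
      obtain ⟨z, hz⟩ := hpre _ _ hopen hcl.isOpen_compl hcover hne1 hne2
      exact hz.2.2 (image_mono (f := f t) ball_subset_closedBall hz.2.1)
    calc B = closure (ball (0:E) ρ) := (closure_ball 0 hρ.ne').symm
      _ ⊆ closure (f t '' B) := closure_mono hVsub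
      _ = f t '' B := hcl.closure_eq
  -- change of variables
  have hvol : ∀ t ∈ Icc (0:ℝ) t₀,
      (∫ x in B, ((1 : E →L[ℝ] E) + t • A x).det ∂μ) = (μ B).toReal := by
    intro t ht
    have hderivW : ∀ x ∈ B, HasFDerivWithinAt (f t) ((1 : E →L[ℝ] E) + t • A x) B x :=
      fun x hx => (hf'at t x (hBU hx)).hasFDerivWithinAt
    have hcov := lintegral_abs_det_fderiv_eq_addHaar_image μ
      (measurableSet_closedBall (x := (0:E)) (ε := ρ)) hderivW (hinj t ht)
    rw [himg t ht] at hcov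
    have hcont : ContinuousOn (fun x => ((1 : E →L[ℝ] E) + t • A x).det) B :=
      ContinuousLinearMap.continuous_det.comp_continuousOn
        (continuousOn_const.add ((hAc.mono hBU).const_smul t))
    have hInt : IntegrableOn (fun x => ((1 : E →L[ℝ] E) + t • A x).det) B μ :=
      hcont.integrableOn_compact hBc
    have h1 : (∫⁻ x in B, ENNReal.ofReal |((1 : E →L[ℝ] E) + t • A x).det| ∂μ)
        = (∫⁻ x in B, ENNReal.ofReal (((1 : E →L[ℝ] E) + t • A x).det) ∂μ) := by
      refine setLIntegral_congr_fun (measurableSet_closedBall) ?_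
      intro x hx
      simp only [abs_of_pos (hdetpos t ht x hx)]
    have h2 : ENNReal.ofReal (∫ x in B, ((1 : E →L[ℝ] E) + t • A x).det ∂μ)
        = (∫⁻ x in B, ENNReal.ofReal (((1 : E →L[ℝ] E) + t • A x).det) ∂μ) := by
      refine ofReal_integral_eq_lintegral_ofReal hInt ?_
      refine (ae_restrict_iff' measurableSet_closedBall).mpr (ae_of_all _ ?_)
      intro x hx
      exact (hdetpos t ht x hx).le
    have h3 : ENNReal.ofReal (∫ x in B, ((1 : E →L[ℝ] E) + t • A x).det ∂μ) = μ B := by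
      rw [h2, ← h1, hcov]
    have h4 : 0 ≤ ∫ x in B, ((1 : E →L[ℝ] E) + t • A x).det ∂μ := by
      refine setIntegral_nonneg measurableSet_closedBall ?_
      intro x hx
      exact (hdetpos t ht x hx).le
    rw [← h3, ENNReal.toReal_ofReal h4]
  obtain ⟨Q, hQ⟩ := exists_poly μ (hAc.mono hBU)
  have hconst : ∀ t ∈ Icc (0:ℝ) t₀, Q.eval t = (μ B).toReal :=
    fun t ht => (hQ t).symm.trans (hvol t ht)
  have hQ1 : Q.eval 1 = (μ B).toReal := by
    have hR : Q - Polynomial.C ((μ B).toReal) = 0 := by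
      apply Polynomial.eq_zero_of_infinite_isRoot
      apply Set.Infinite.mono (s := Set.Icc (0:ℝ) t₀) ?_ (Set.Icc_infinite ht₀pos)
      intro t ht
      simp only [Set.mem_setOf_eq, Polynomial.IsRoot, Polynomial.eval_sub, Polynomial.eval_C,
        sub_eq_zero]
      exact hconst t ht
    have := congrArg (Polynomial.eval 1) hR
    simpa [sub_eq_zero] using this
  -- determinant vanishes at t = 1
  have hzero : (∫ x in B, ((1 : E →L[ℝ] E) + (1:ℝ) • A x).det ∂μ) = 0 := by
    have hae : B =ᵐ[μ] ball (0:E) ρ := by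
      rw [MeasureTheory.ae_eq_set]
      constructor
      · rw [closedBall_diff_ball]
        exact Measure.addHaar_sphere μ 0 ρ
      · rw [diff_eq_empty.mpr ball_subset_closedBall]
        exact measure_empty
    rw [setIntegral_congr_set hae]
    refine setIntegral_eq_zero_of_forall_eq_zero ?_
    intro x hx
    have hxB : x ∈ B := ball_subset_closedBall hx
    have hxU : x ∈ U := hBU hxB
    have hrd : DifferentiableAt ℝ r x := (hr.contDiffAt (hU.mem_nhds hxU)).differentiableAt one_ne_zero
    have hone : ((1 : E →L[ℝ] E) + (1:ℝ) • A x) = fderiv ℝ r x := by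
      have h1 : HasFDerivAt r ((1 : E →L[ℝ] E) + A x) x := by
        have h2 := (hasFDerivAt_id x).add ((hdiff x hxU).hasFDerivAt)
        have h3 : (id + h : E → E) = r := by
          funext y
          show id y + (r y - y) = r y
          simp
        rw [h3] at h2
        exact h2
      rw [h1.fderiv, one_smul]
    rw [hone]
    by_contra hdet
    set L := fderiv ℝ r x with hLdef
    have hLdet : LinearMap.det (L : E →ₗ[ℝ] E) ≠ 0 := hdet
    have hsurj : Function.Surjective L := by
      intro y
      obtain ⟨z, hz⟩ := (LinearMap.equivOfDetNeZero (L : E →ₗ[ℝ] E) hLdet).surjective y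
      refine ⟨z, ?_⟩
      have h7 : ((LinearMap.equivOfDetNeZero (L : E →ₗ[ℝ] E) hLdet : E →ₗ[ℝ] E))
          = (L : E →ₗ[ℝ] E) := LinearEquiv.coe_ofIsUnitDet _
      have h8 : (LinearMap.equivOfDetNeZero (L : E →ₗ[ℝ] E) hLdet) z
          = (L : E →ₗ[ℝ] E) z := by
        conv_lhs => rw [← LinearEquiv.coe_coe]
        rw [h7]
      have h9 : L z = (L : E →ₗ[ℝ] E) z := rfl
      rw [h9, ← h8]
      exact hz
    -- the squared norm is locally constant
    have hq := (hrd.hasFDerivAt.inner ℝ hrd.hasFDerivAt)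
    have hloc : (fun y => (⟪r y, r y⟫ : ℝ)) =ᶠ[𝓝 x] (fun _ => ρ^2) := by
      filter_upwards [isOpen_ball.mem_nhds hx] with y hy
      have : ‖r y‖ = ρ := hnorm y (ball_subset_closedBall hy)
      rw [real_inner_self_eq_norm_sq, this]
    have hfd0 : fderiv ℝ (fun y => (⟪r y, r y⟫ : ℝ)) x = 0 := by
      rw [hloc.fderiv_eq]
      exact fderiv_const_apply _
    rw [hq.fderiv] at hfd0
    have hval : ∀ v : E, (⟪r x, L v⟫ : ℝ) = 0 := by
      intro v
      have := congrArg (fun (T : E →L[ℝ] ℝ) => T v) hfd0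
      simp only [ContinuousLinearMap.comp_apply, ContinuousLinearMap.zero_apply] at this
      rw [ContinuousLinearMap.prod_apply] at this
      rw [fderivInnerCLM_apply] at this
      have hsymm : (⟪L v, r x⟫ : ℝ) = ⟪r x, L v⟫ := real_inner_comm _ _
      rw [hsymm] at this
      linarith
    obtain ⟨v, hv⟩ := hsurj (r x)
    have h5 := hval v
    rw [hv, real_inner_self_eq_norm_sq] at h5
    have h6 : ‖r x‖ = ρ := hnorm x hxB
    rw [h6] at h5
    nlinarith
  have h1Q : Q.eval 1 = 0 := by rw [← hQ 1, hzero]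
  have hpos : 0 < (μ B).toReal := by
    have h2 : 0 < μ (ball (0:E) ρ) := measure_ball_pos μ 0 hρ
    have h3 : μ (ball (0:E) ρ) ≤ μ B := measure_mono ball_subset_closedBall
    exact ENNReal.toReal_pos (ne_of_gt (lt_of_lt_of_le h2 h3)) hBc.measure_lt_top.ne
  rw [hQ1] at h1Q
  linarith

set_option maxHeartbeats 1000000 in
theorem no_smooth_outward_field [MeasurableSpace E] [BorelSpace E] (μ : Measure E)
    [μ.IsAddHaarMeasure]
    {ρ : ℝ} (hρ : 0 < ρ) {P : E → E} (hP : ContDiff ℝ 1 P)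
    (hP0 : ∀ x ∈ closedBall (0:E) ρ, P x ≠ 0)
    (hb : ∀ x : E, ‖x‖ = ρ → 0 < ⟪P x, x⟫) : False := by
  rcases subsingleton_or_nontrivial E with hs | hn
  · exact hP0 0 (mem_closedBall_self hρ.le) (Subsingleton.elim _ _)
  set g : E → E := fun x => -((ρ / ‖P x‖) • P x) with hg
  set u : E → E := fun x => x - g x with hu
  set D : E → ℝ := fun x => (⟪x, u x⟫ : ℝ)^2 + (ρ^2 - ‖x‖^2) * ‖u x‖^2 with hD
  set τ : E → ℝ := fun x => (-(⟪x, u x⟫ : ℝ) + Real.sqrt (D x)) / ‖u x‖^2 with hτ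
  set r : E → E := fun x => x + τ x • u x with hrdef
  have hgnorm : ∀ x : E, P x ≠ 0 → ‖g x‖ = ρ := by
    intro x hx
    have hnp : 0 < ‖P x‖ := norm_pos_iff.mpr hx
    show ‖-((ρ / ‖P x‖) • P x)‖ = ρ
    rw [norm_neg, norm_smul, Real.norm_eq_abs, abs_of_nonneg (by positivity)]
    field_simp
  have hPg : ∀ x : E, P x ≠ 0 → (⟪P x, g x⟫ : ℝ) < 0 := by
    intro x hx
    have hnp : 0 < ‖P x‖ := norm_pos_iff.mpr hx
    have h1 : (⟪P x, g x⟫ : ℝ) = -((ρ / ‖P x‖) * ⟪P x, P x⟫) := by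
      show (⟪P x, -((ρ / ‖P x‖) • P x)⟫ : ℝ) = _
      rw [inner_neg_right, real_inner_smul_right]
    rw [h1, real_inner_self_eq_norm_sq]
    have h2 : 0 < (ρ / ‖P x‖) * ‖P x‖^2 := by positivity
    linarith
  have hu0 : ∀ x ∈ closedBall (0:E) ρ, u x ≠ 0 := by
    intro x hx hux
    have hx' : x = g x := by
      have : x - g x = 0 := hux
      rwa [sub_eq_zero] at this
    have hxn : ‖x‖ = ρ := by rw [hx']; exact hgnorm x (hP0 x hx)
    have h1 := hb x hxn
    have h2 : (⟪P x, x⟫ : ℝ) = ⟪P x, g x⟫ := congrArg (fun z => (⟪P x, z⟫ : ℝ)) hx'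
    rw [h2] at h1
    linarith [hPg x (hP0 x hx)]
  have hxu : ∀ x ∈ closedBall (0:E) ρ, ‖x‖ = ρ → 0 < (⟪x, u x⟫ : ℝ) := by
    intro x hx hxρ
    have hgx : ‖g x‖ = ρ := hgnorm x (hP0 x hx)
    have h1 : (⟪x, g x⟫ : ℝ) < ρ^2 := by
      rcases lt_or_eq_of_le (real_inner_le_norm x (g x)) with hlt | heq
      · rw [hxρ, hgx] at hlt; nlinarith
      · exfalso
        have h3 := inner_eq_norm_mul_iff_real.mp heq
        rw [hxρ, hgx] at h3
        have h4 : x = g x := smul_right_injective E hρ.ne' h3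
        exact hu0 x hx (by rw [hu]; show x - g x = 0; rw [← h4, sub_self])
    have h2 : (⟪x, u x⟫ : ℝ) = ρ^2 - ⟪x, g x⟫ := by
      show (⟪x, x - g x⟫ : ℝ) = _
      rw [inner_sub_right, real_inner_self_eq_norm_sq, hxρ]
    rw [h2]; linarith
  have hDpos : ∀ x ∈ closedBall (0:E) ρ, 0 < D x := by
    intro x hx
    rcases lt_or_eq_of_le (mem_closedBall_zero_iff.mp hx) with hlt | heq
    · have h1 : 0 < ρ^2 - ‖x‖^2 := by nlinarith [norm_nonneg x]
      have h2 : 0 < ‖u x‖^2 := pow_pos (norm_pos_iff.mpr (hu0 x hx)) 2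
      have h3 := sq_nonneg ((⟪x, u x⟫ : ℝ))
      show 0 < (⟪x, u x⟫ : ℝ)^2 + (ρ^2 - ‖x‖^2) * ‖u x‖^2
      nlinarith
    · have h4 := hxu x hx heq
      show 0 < (⟪x, u x⟫ : ℝ)^2 + (ρ^2 - ‖x‖^2) * ‖u x‖^2
      rw [heq]
      nlinarith
  have hrid : ∀ x : E, ‖x‖ = ρ → r x = x := by
    intro x hxρ
    have hxB : x ∈ closedBall (0:E) ρ := by rw [mem_closedBall_zero_iff, hxρ]
    have hb0 : 0 < (⟪x, u x⟫ : ℝ) := hxu x hxB hxρ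
    have hDx : D x = (⟪x, u x⟫ : ℝ)^2 := by
      show (⟪x, u x⟫ : ℝ)^2 + (ρ^2 - ‖x‖^2) * ‖u x‖^2 = _
      rw [hxρ]; ring
    have hτ0 : τ x = 0 := by
      show (-(⟪x, u x⟫ : ℝ) + Real.sqrt (D x)) / ‖u x‖^2 = 0
      rw [hDx, Real.sqrt_sq hb0.le]
      simp
    show x + τ x • u x = x
    rw [hτ0, zero_smul, add_zero]
  have hrnorm : ∀ x ∈ closedBall (0:E) ρ, ‖r x‖ = ρ := by
    intro x hx
    have hun : u x ≠ 0 := hu0 x hx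
    have ha : 0 < ‖u x‖^2 := pow_pos (norm_pos_iff.mpr hun) 2
    have hDx : 0 < D x := hDpos x hx
    have hsq : Real.sqrt (D x)^2 = D x := Real.sq_sqrt hDx.le
    have hDval : D x = (⟪x, u x⟫ : ℝ)^2 + (ρ^2 - ‖x‖^2) * ‖u x‖^2 := rfl
    have hτval : τ x = (-(⟪x, u x⟫ : ℝ) + Real.sqrt (D x)) / ‖u x‖^2 := rfl
    have hDval : D x = (⟪x, u x⟫ : ℝ)^2 - (‖x‖^2 - ρ^2) * ‖u x‖^2 := by
      show (⟪x, u x⟫ : ℝ)^2 + (ρ^2 - ‖x‖^2) * ‖u x‖^2 = _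
      ring
    have hτa : τ x * ‖u x‖^2 = -(⟪x, u x⟫ : ℝ) + Real.sqrt (D x) := by
      rw [hτval]
      field_simp
    have h9 : (τ x * ‖u x‖^2)^2 + 2*(⟪x, u x⟫ : ℝ)*(τ x * ‖u x‖^2)
        + (‖x‖^2 - ρ^2)*‖u x‖^2 = 0 := by
      rw [hτa]
      linear_combination hsq + hDval
    have h10 : ‖u x‖^2 * (‖u x‖^2*(τ x)^2 + 2*(⟪x, u x⟫ : ℝ)*(τ x) + (‖x‖^2 - ρ^2)) = 0 := by
      linear_combination h9
    have hquad : ‖u x‖^2 * (τ x)^2 + 2*(⟪x, u x⟫ : ℝ)*(τ x) + (‖x‖^2 - ρ^2) = 0 :=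
      (mul_eq_zero.mp h10).resolve_left (ne_of_gt ha)
    have hnormsq : ‖r x‖^2 = ‖x‖^2 + 2*(τ x)*(⟪x, u x⟫ : ℝ) + (τ x)^2*‖u x‖^2 := by
      have h5 : ‖r x‖^2 = ‖x‖^2 + 2 * (⟪x, τ x • u x⟫ : ℝ) + ‖τ x • u x‖^2 := by
        exact norm_add_sq_real x (τ x • u x)
      rw [h5, real_inner_smul_right, norm_smul, Real.norm_eq_abs, mul_pow, sq_abs]
      ring
    have h6 : ‖r x‖^2 = ρ^2 := by rw [hnormsq]; nlinarith [hquad]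
    have h7 : (‖r x‖ - ρ) * (‖r x‖ + ρ) = 0 := by nlinarith [h6]
    rcases mul_eq_zero.mp h7 with h8 | h8
    · linarith
    · linarith [norm_nonneg (r x)]
  -- smoothness data
  have hgat : ∀ x : E, P x ≠ 0 → ContDiffAt ℝ 1 g x := by
    intro x hx
    have hn : ContDiffAt ℝ 1 (fun y => ‖P y‖) x := (hP.contDiffAt).norm ℝ hx
    exact (((contDiffAt_const (c := ρ)).div hn (norm_ne_zero_iff.mpr hx)).smul hP.contDiffAt).neg
  have huat : ∀ x : E, P x ≠ 0 → ContDiffAt ℝ 1 u x :=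
    fun x hx => contDiffAt_id.sub (hgat x hx)
  have hDat : ∀ x : E, P x ≠ 0 → ContDiffAt ℝ 1 D x := by
    intro x hx
    have h1 : ContDiffAt ℝ 1 (fun y => (⟪y, u y⟫ : ℝ)) x := contDiffAt_id.inner ℝ (huat x hx)
    have h2 : ContDiffAt ℝ 1 (fun y => ‖u y‖^2) x := (huat x hx).norm_sq ℝ
    have h3 : ContDiffAt ℝ 1 (fun y => ‖y‖^2) x := contDiffAt_id.norm_sq ℝ
    exact (h1.pow 2).add (((contDiffAt_const (c := ρ^2)).sub h3).mul h2)
  set V : Set E := {x | P x ≠ 0} with hVdef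
  have hVopen : IsOpen V := isOpen_compl_singleton.preimage hP.continuous
  set U : Set E := (V ∩ u⁻¹' ({0}ᶜ)) ∩ D⁻¹' (Ioi 0) with hUdef
  have hBU : closedBall (0:E) ρ ⊆ U := fun x hx =>
    ⟨⟨hP0 x hx, hu0 x hx⟩, hDpos x hx⟩
  have hUopen : IsOpen U := by
    have hucont : ContinuousOn u V := fun x hx => ((huat x hx).continuousAt).continuousWithinAt
    have hDcont : ContinuousOn D V := fun x hx => ((hDat x hx).continuousAt).continuousWithinAt
    have hW1 : IsOpen (V ∩ u⁻¹' ({0}ᶜ)) :=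
      hucont.isOpen_inter_preimage hVopen isOpen_compl_singleton
    exact (hDcont.mono inter_subset_left).isOpen_inter_preimage hW1 isOpen_Ioi
  have hrsm : ContDiffOn ℝ 1 r U := by
    intro x hx
    obtain ⟨⟨hx1, hx2⟩, hx3⟩ := hx
    apply ContDiffAt.contDiffWithinAt
    have hx3' : 0 < D x := hx3
    have hτat : ContDiffAt ℝ 1 τ x := by
      have hsq : ContDiffAt ℝ 1 (fun y => Real.sqrt (D y)) x :=
        (Real.contDiffAt_sqrt (ne_of_gt hx3')).comp x (hDat x hx1)
      have hnum : ContDiffAt ℝ 1 (fun y => -(⟪y, u y⟫ : ℝ) + Real.sqrt (D y)) x :=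
        ((contDiffAt_id.inner ℝ (huat x hx1)).neg).add hsq
      have hden : ContDiffAt ℝ 1 (fun y => ‖u y‖^2) x := (huat x hx1).norm_sq ℝ
      have hdne : ‖u x‖^2 ≠ 0 := ne_of_gt (pow_pos (norm_pos_iff.mpr hx2) 2)
      exact hnum.div hden hdne
    exact contDiffAt_id.add (hτat.smul (huat x hx1))
  exact no_smooth_retraction μ hρ hUopen hBU hrsm hrnorm hrid

theorem smooth_approx [MeasurableSpace E] [BorelSpace E] (μ : Measure E)
    [μ.IsAddHaarMeasure] (S : E → E) (hS : Continuous S) (ρ : ℝ) {ε : ℝ} (hε : 0 < ε) :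
    ∃ P : E → E, ContDiff ℝ 1 P ∧ ∀ x ∈ closedBall (0:E) ρ, ‖P x - S x‖ ≤ ε := by
  have hK : IsCompact (closedBall (0:E) (ρ+1)) := isCompact_closedBall _ _
  have hUC : UniformContinuousOn S (closedBall (0:E) (ρ+1)) :=
    hK.uniformContinuousOn_of_continuous hS.continuousOn
  rw [Metric.uniformContinuousOn_iff] at hUC
  obtain ⟨δ, hδ, hδ'⟩ := hUC ε hε
  set δ' : ℝ := min δ 1 with hδ'def
  have hδ'pos : 0 < δ' := lt_min hδ one_pos
  let φ : ContDiffBump (0:E) := ⟨δ'/2, δ', by positivity, by linarith⟩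
  refine ⟨(φ.normed μ) ⋆[ContinuousLinearMap.lsmul ℝ ℝ, μ] S, ?_, ?_⟩
  · exact HasCompactSupport.contDiff_convolution_left _ φ.hasCompactSupport_normed
      (φ.contDiff_normed (n := 1)) (hS.locallyIntegrable (μ := μ))
  · intro x hx
    rw [← dist_eq_norm]
    refine ContDiffBump.dist_normed_convolution_le hS.aestronglyMeasurable ?_
    intro y hy
    have hxK : x ∈ closedBall (0:E) (ρ+1) := by
      simp only [mem_closedBall] at hx ⊢; linarith
    have hyK : y ∈ closedBall (0:E) (ρ+1) := by
      simp only [mem_closedBall] at hx ⊢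
      have : dist y x < δ' := mem_ball.mp hy
      have h1 : δ' ≤ 1 := min_le_right _ _
      have := dist_triangle y x 0
      simp only [dist_zero_right] at hx this ⊢
      linarith
    have : dist y x < δ := lt_of_lt_of_le (mem_ball.mp hy) (min_le_left _ _)
    exact (hδ' y hyK x hxK this).le

end BrouwerAux

/-- a consequence of the Brouwer fixed point theorem.
If `H` is a finite-dimensional real Hilbert space and `S : H → H` is continuous
with `(S(v), v) > 0` for all `v` with `‖v‖ = ρ` (where `ρ > 0`), then there
exists `w` with `S(w) = 0` and `‖w‖ ≤ ρ`. -/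
theorem brouwer_zero_of_inner_pos_on_sphere
    {H : Type*} [NormedAddCommGroup H] [InnerProductSpace ℝ H] [FiniteDimensional ℝ H]
    (S : H → H) (hS : Continuous S) (ρ : ℝ) (hρ : 0 < ρ)
    (h : ∀ v : H, ‖v‖ = ρ → 0 < ⟪S v, v⟫) :
    ∃ w : H, S w = 0 ∧ ‖w‖ ≤ ρ := by
  by_contra hcon
  push_neg at hcon
  rcases subsingleton_or_nontrivial H with hsub | hnon
  · have h0 := hcon 0 (Subsingleton.elim _ _)
    rw [norm_zero] at h0
    linarith
  borelize H
  let μ : Measure H := (Module.finBasis ℝ H).addHaar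
  haveI : μ.IsAddHaarMeasure := isAddHaarMeasure_basis_addHaar _
  -- minimum of ‖S x‖ on the closed ball
  have hSn : ContinuousOn (fun x => ‖S x‖) (closedBall (0:H) ρ) :=
    (hS.norm).continuousOn
  obtain ⟨x₀, hx₀B, hx₀'⟩ := (isCompact_closedBall (0:H) ρ).exists_isMinOn
    ⟨0, mem_closedBall_self hρ.le⟩ hSn
  have hx₀ : ∀ x ∈ closedBall (0:H) ρ, ‖S x₀‖ ≤ ‖S x‖ := fun x hx => hx₀' hx
  set m : ℝ := ‖S x₀‖ with hm
  have hmpos : 0 < m := by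
    rw [hm]
    refine norm_pos_iff.mpr ?_
    intro h0
    exact absurd (mem_closedBall_zero_iff.mp hx₀B) (not_le.mpr (hcon x₀ h0))
  -- minimum of the inner product on the sphere
  have hsph : (sphere (0:H) ρ).Nonempty := by
    obtain ⟨v, hv⟩ := exists_norm_eq H hρ.le
    exact ⟨v, by rwa [mem_sphere_zero_iff_norm]⟩
  obtain ⟨y₀, hy₀s, hy₀'⟩ := (isCompact_sphere (0:H) ρ).exists_isMinOn hsph
    (Continuous.continuousOn (by continuity :
      Continuous (fun x : H => (⟪S x, x⟫ : ℝ))))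
  have hy₀ : ∀ x ∈ sphere (0:H) ρ, (⟪S y₀, y₀⟫ : ℝ) ≤ ⟪S x, x⟫ := fun x hx => hy₀' hx
  set c : ℝ := (⟪S y₀, y₀⟫ : ℝ) with hc
  have hcpos : 0 < c := h y₀ (mem_sphere_zero_iff_norm.mp hy₀s)
  set ε : ℝ := min (m/2) (c/(2*ρ)) with hε
  have hεpos : 0 < ε := lt_min (by positivity) (by positivity)
  obtain ⟨P, hPsm, hPa⟩ := smooth_approx μ S hS ρ hεpos
  refine no_smooth_outward_field μ hρ hPsm ?_ ?_
  · intro x hx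
    have h1 : ‖S x‖ ≥ m := hx₀ x hx
    have h2 : ‖P x - S x‖ ≤ ε := hPa x hx
    have h3 : ε ≤ m/2 := min_le_left _ _
    intro hP0
    rw [hP0] at h2
    rw [zero_sub, norm_neg] at h2
    linarith
  · intro x hxρ
    have hxB : x ∈ closedBall (0:H) ρ := by rw [mem_closedBall_zero_iff, hxρ]
    have h1 : c ≤ (⟪S x, x⟫ : ℝ) := hy₀ x (by rwa [mem_sphere_zero_iff_norm])
    have h2 : ‖P x - S x‖ ≤ ε := hPa x hxB
    have h3 : ε ≤ c/(2*ρ) := min_le_right _ _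
    have h4 : (⟪P x, x⟫ : ℝ) = ⟪S x, x⟫ + ⟪P x - S x, x⟫ := by
      rw [← inner_add_left]
      congr 1
      abel
    have h5 : |(⟪P x - S x, x⟫ : ℝ)| ≤ ‖P x - S x‖ * ‖x‖ := abs_real_inner_le_norm _ _
    have h6 : ‖P x - S x‖ * ‖x‖ ≤ (c/(2*ρ)) * ρ := by
      rw [hxρ]
      exact mul_le_mul_of_nonneg_right (h2.trans h3) hρ.le
    have h7 : (c/(2*ρ)) * ρ = c/2 := by field_simp
    rw [h4]
    have h8 := abs_le.mp h5
    linarith [h6, h7 ▸ h6]
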